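/- Let p be a prime and let R be a commutative topological ring such that the subgroups p^n R (n ∈ ℕ) form a neighbourhood basis of 0 and such that the canonical map R → lim_n R/p^n R is bijective (R is p-adically complete and separated). Let I be a set, equip the product ∏_{i∈I} R with the product topology and the componentwise R-module structure, and let e_i denote the element of ∏_{i∈I} R with i-th component 1 and all other components 0. Then an R-linear map φ : ∏_{i∈I} R → R is continuous if and only if there exists a family a : I → R tending to zero such that for every x ∈ ∏_{i∈I} R the family (a_i · x_i)_{i∈I} is summable in R and φ(x) = Σ_{i∈I} a_i x_i; moreover such a family is unique and is given by a_i = φ(e_i). Consequently φ ↦ (φ(e_i))_{i∈I} is a bijection from the set of continuous R-linear maps ∏_{i∈I} R → R onto the set of families I → R tending to zero. -/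

import Mathlib

open Filter

namespace Stmt8

/-- A family `a : I → R` tends to zero `p`-adically if for every `n` only finitely many of
its members lie outside `p^n R`. -/
def TendsToZero (p : ℕ) {I R : Type*} [CommRing R] (a : I → R) : Prop :=
  ∀ n : ℕ, {i : I | ¬ (p : R) ^ n ∣ a i}.Finite

section Aux

variable {p : ℕ} {R : Type*} [CommRing R]

lemma mem_smul_top_iff (n : ℕ) (x : R) :
    x ∈ ((Ideal.span {(p : R)}) ^ n • (⊤ : Submodule R R) : Submodule R R) ↔
      (p : R) ^ n ∣ x := by
  rw [smul_eq_mul, Ideal.mul_top, Ideal.span_singleton_pow, Ideal.mem_span_singleton]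

lemma masked_eq_sum {I : Type*} [DecidableEq I] (x : I → R) (T : Finset I) :
    (fun j => if j ∈ T then x j else 0) = ∑ i ∈ T, x i • (Pi.single i (1 : R) : I → R) := by
  funext j
  rw [Finset.sum_apply]
  simp only [Pi.smul_apply, Pi.single_apply, smul_eq_mul, mul_ite, mul_one, mul_zero]
  rw [Finset.sum_ite_eq T j (fun i => x i)]

variable [TopologicalSpace R] [IsTopologicalRing R]
variable (hbasis : (nhds (0 : R)).HasBasis (fun _ : ℕ => True)
      (fun n => {x : R | (p : R) ^ n ∣ x}))

include hbasis in
lemma tendsto_iff_dvd {α : Type*} {l : Filter α} (f : α → R) (L : R) :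
    Tendsto f l (nhds L) ↔ ∀ n : ℕ, ∀ᶠ t in l, (p : R) ^ n ∣ (f t - L) := by
  rw [← tendsto_sub_nhds_zero_iff, hbasis.tendsto_right_iff]
  simp only [true_implies, Set.mem_setOf_eq]

include hbasis in
lemma isClosed_pow_dvd (n : ℕ) : IsClosed {x : R | (p : R) ^ n ∣ x} := by
  have hset : ((Ideal.span {(p : R) ^ n}).toAddSubgroup : Set R)
      = {x : R | (p : R) ^ n ∣ x} := by
    ext x; simp [Ideal.mem_span_singleton]
  rw [← hset]
  exact AddSubgroup.isClosed_of_isOpen _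
    (AddSubgroup.isOpen_of_mem_nhds _ (by rw [hset]; exact hbasis.mem_of_mem trivial))

include hbasis in
lemma t2space_of_hausdorff (hh : IsHausdorff (Ideal.span {(p : R)}) R) : T2Space R := by
  apply IsTopologicalAddGroup.t2Space_of_zero_sep
  intro x hx
  have h : ¬ ∀ n : ℕ, (p : R) ^ n ∣ x := by
    intro h
    exact hx (hh.haus x fun n => by rw [SModEq.zero, mem_smul_top_iff]; exact h n)
  push_neg at h
  obtain ⟨n, hn⟩ := h
  exact ⟨{y : R | (p : R) ^ n ∣ y}, hbasis.mem_of_mem trivial, hn⟩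

include hbasis in
lemma exists_hasSum (hprec : IsPrecomplete (Ideal.span {(p : R)}) R)
    {I : Type*} (a x : I → R) (ha : TendsToZero p a) :
    ∃ L : R, HasSum (fun i => a i * x i) L := by
  classical
  set T : ℕ → Finset I := fun n => (ha n).toFinset with hTdef
  have hT : ∀ (n : ℕ) (i : I), i ∉ T n → (p : R) ^ n ∣ a i := by
    intro n i hi
    by_contra h
    exact hi ((ha n).mem_toFinset.2 h)
  set f : ℕ → R := fun n => ∑ i ∈ T n, a i * x i with hfdef
  have hmono : ∀ {m n : ℕ}, m ≤ n → T m ⊆ T n := by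
    intro m n hmn i hi
    rw [Set.Finite.mem_toFinset] at hi ⊢
    exact fun h => hi ((pow_dvd_pow _ hmn).trans h)
  have hcau : ∀ {m n : ℕ}, m ≤ n →
      f m ≡ f n [SMOD ((Ideal.span {(p : R)}) ^ m • ⊤ : Submodule R R)] := by
    intro m n hmn
    rw [SModEq.sub_mem, mem_smul_top_iff]
    have h1 : f n - f m = ∑ i ∈ T n \ T m, a i * x i := by
      rw [hfdef]
      simp only
      rw [← Finset.sum_sdiff (hmono hmn)]
      ring
    have h2 : (p : R) ^ m ∣ f n - f m := by
      rw [h1]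
      refine Finset.dvd_sum fun i hi => ?_
      exact Dvd.dvd.mul_right (hT m i (Finset.mem_sdiff.1 hi).2) _
    rw [show f m - f n = -(f n - f m) by ring]
    exact h2.neg_right
  obtain ⟨L, hL⟩ := hprec.prec hcau
  refine ⟨L, ?_⟩
  rw [HasSum, SummationFilter.unconditional_filter, tendsto_iff_dvd hbasis]
  intro n
  filter_upwards [Filter.eventually_ge_atTop (T n)] with s hs
  have h1 : (p : R) ^ n ∣ (∑ i ∈ s, a i * x i - f n) := by
    have : ∑ i ∈ s, a i * x i - f n = ∑ i ∈ s \ T n, a i * x i := by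
      rw [hfdef]; simp only
      rw [← Finset.sum_sdiff hs]; ring
    rw [this]
    exact Finset.dvd_sum fun i hi => (hT n i (Finset.mem_sdiff.1 hi).2).mul_right _
  have h2 : (p : R) ^ n ∣ (f n - L) := by
    have := hL n
    rw [SModEq.sub_mem, mem_smul_top_iff] at this
    exact this
  simpa [sub_add_sub_cancel] using dvd_add h1 h2

include hbasis in
lemma continuous_vanish {I : Type*} (φ : (I → R) →ₗ[R] R) (hφ : Continuous φ) (n : ℕ) :
    ∃ S : Finset I, ∀ x : I → R, (∀ i ∈ S, x i = 0) → (p : R) ^ n ∣ φ x := by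
  classical
  have h0 : Tendsto φ (nhds (0 : I → R)) (nhds (0 : R)) := by
    simpa [map_zero] using hφ.tendsto 0
  have hev : {x : I → R | (p : R) ^ n ∣ φ x} ∈ nhds (0 : I → R) :=
    h0 (hbasis.mem_of_mem trivial)
  rw [nhds_pi, Filter.mem_pi] at hev
  obtain ⟨J, hJfin, t, ht, hsub⟩ := hev
  refine ⟨hJfin.toFinset, fun x hx => hsub fun i hi => ?_⟩
  have : x i = 0 := hx i (hJfin.mem_toFinset.2 hi)
  rw [this]
  exact mem_of_mem_nhds (ht i)

end Aux

/-- Let `R` be a `p`-adically complete and separated topological ring whose topology is the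
`p`-adic one. An `R`-linear map `φ : ∏_I R → R` is continuous (for the product topology) if
and only if there is a family `a : I → R` tending to zero with `φ x = Σ_i a_i x_i` (a
summable family) for all `x`; such a family is unique, given by `a_i = φ(e_i)`; and
`φ ↦ (φ(e_i))_i` is a bijection from the continuous `R`-linear maps onto the families
tending to zero. -/
theorem continuous_dual_of_product
    (p : ℕ) [Fact p.Prime]
    (R : Type*) [CommRing R] [TopologicalSpace R] [IsTopologicalRing R]
    (hbasis : (nhds (0 : R)).HasBasis (fun _ : ℕ => True)
      (fun n => {x : R | (p : R) ^ n ∣ x}))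
    (hcomplete : IsAdicComplete (Ideal.span {(p : R)}) R)
    (I : Type*) [DecidableEq I] :
    (∀ φ : (I → R) →ₗ[R] R,
      (Continuous φ ↔
        ∃ a : I → R, TendsToZero p a ∧
          ∀ x : I → R, HasSum (fun i : I => a i * x i) (φ x))) ∧
    (∀ φ : (I → R) →ₗ[R] R, Continuous φ →
      ∀ a : I → R,
        (TendsToZero p a ∧ ∀ x : I → R, HasSum (fun i : I => a i * x i) (φ x)) →
          a = fun i : I => φ (Pi.single i 1)) ∧
    Set.BijOn (fun (φ : (I → R) →ₗ[R] R) (i : I) => φ (Pi.single i 1))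
      {φ : (I → R) →ₗ[R] R | Continuous φ}
      {a : I → R | TendsToZero p a} := by
  classical
  haveI hT2 : T2Space R := t2space_of_hausdorff hbasis hcomplete.toIsHausdorff
  -- forward direction: a continuous map has the canonical representation
  have key1 : ∀ φ : (I → R) →ₗ[R] R, Continuous φ →
      TendsToZero p (fun i => φ (Pi.single i 1)) ∧
      ∀ x : I → R, HasSum (fun i => φ (Pi.single i 1) * x i) (φ x) := by
    intro φ hφ
    constructor
    · intro n
      obtain ⟨S, hS⟩ := continuous_vanish hbasis φ hφ n
      refine Set.Finite.subset S.finite_toSet ?_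
      intro i hi
      by_contra hiS
      refine hi (hS (Pi.single i 1) fun j hjS => ?_)
      refine Pi.single_eq_of_ne (fun hji => hiS ?_) 1
      rwa [← hji]
    · intro x
      rw [HasSum, SummationFilter.unconditional_filter, tendsto_iff_dvd hbasis]
      intro n
      obtain ⟨S, hS⟩ := continuous_vanish hbasis φ hφ n
      filter_upwards [Filter.eventually_ge_atTop S] with T hTS
      have hrepr : ∑ i ∈ T, φ (Pi.single i 1) * x i
          = φ (fun j => if j ∈ T then x j else 0) := by
        rw [masked_eq_sum, map_sum]
        refine Finset.sum_congr rfl fun i _ => ?_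
        rw [map_smul, smul_eq_mul, mul_comm]
      rw [hrepr]
      have hmask : (fun j => if j ∈ T then x j else 0) - x
          = fun j => if j ∈ T then 0 else - x j := by
        funext j; by_cases h : j ∈ T <;> simp [h]
      have hd : (p : R) ^ n ∣ φ ((fun j => if j ∈ T then x j else 0) - x) := by
        rw [hmask]
        exact hS _ fun i hiS => by simp [hTS hiS]
      simpa [map_sub] using hd
  -- uniqueness of the representing family
  have key2 : ∀ (φ : (I → R) →ₗ[R] R) (a : I → R),
      (∀ x : I → R, HasSum (fun i => a i * x i) (φ x)) →
      a = fun i => φ (Pi.single i 1) := by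
    intro φ a hsum
    funext i
    have h1 := hsum (Pi.single i 1)
    have h2 : HasSum (fun j => a j * (Pi.single i (1 : R) : I → R) j) (a i) := by
      have heq : (fun j => a j * (Pi.single i (1 : R) : I → R) j)
          = fun j => if j = i then a i else 0 := by
        funext j
        rcases eq_or_ne j i with h | h
        · subst h; simp
        · simp [Pi.single_eq_of_ne h, h]
      rw [heq]
      exact hasSum_ite_eq i (a i)
    exact h2.unique h1
  -- converse direction: a represented map is continuous
  have key3 : ∀ (φ : (I → R) →ₗ[R] R) (a : I → R), TendsToZero p a →
      (∀ x : I → R, HasSum (fun i => a i * x i) (φ x)) → Continuous φ := by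
    intro φ a ha hsum
    have hC : ContinuousAt φ 0 := by
      rw [ContinuousAt, map_zero, hbasis.tendsto_right_iff]
      intro n _
      have hev : ∀ᶠ x : I → R in nhds 0, ∀ i ∈ (ha n).toFinset, (p : R) ^ n ∣ x i := by
        rw [Filter.eventually_all_finset]
        intro i _
        have hcont : Tendsto (fun x : I → R => x i) (nhds 0) (nhds 0) := by
          simpa using (continuous_apply i).tendsto (0 : I → R)
        exact hcont (hbasis.mem_of_mem trivial)
      filter_upwards [hev] with x hx
      refine (isClosed_pow_dvd hbasis n).mem_of_tendsto (hsum x)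
        (Filter.Eventually.of_forall fun T => ?_)
      refine Finset.dvd_sum fun i _ => ?_
      by_cases h : (p : R) ^ n ∣ a i
      · exact h.mul_right _
      · exact (hx i ((ha n).mem_toFinset.2 h)).mul_left _
    exact continuous_of_continuousAt_zero φ hC
  -- existence: every family tending to zero comes from a linear map
  have key4 : ∀ a : I → R, TendsToZero p a → ∃ φ : (I → R) →ₗ[R] R,
      ∀ x : I → R, HasSum (fun i => a i * x i) (φ x) := by
    intro a ha
    have hsummable : ∀ x : I → R, Summable (fun i => a i * x i) := fun x =>
      ⟨_, (exists_hasSum hbasis hcomplete.toIsPrecomplete a x ha).choose_spec⟩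
    refine ⟨{ toFun := fun x => ∑' i, a i * x i,
              map_add' := ?_, map_smul' := ?_ }, fun x => (hsummable x).hasSum⟩
    · intro x y
      have h1 : HasSum (fun i => a i * (x + y) i) (∑' i, a i * x i + ∑' i, a i * y i) := by
        have h := (hsummable x).hasSum.add (hsummable y).hasSum
        convert h using 1
        funext i; simp [mul_add]
      exact h1.tsum_eq
    · intro r x
      have h1 : HasSum (fun i => a i * (r • x) i) (r * ∑' i, a i * x i) := by
        have h := (hsummable x).hasSum.mul_left r
        convert h using 1
        · rfl
        funext i
        simp only [Pi.smul_apply, smul_eq_mul]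
        ring
      simpa using h1.tsum_eq
  refine ⟨?_, ?_, ?_, ?_, ?_⟩
  · intro φ
    constructor
    · intro hφ
      exact ⟨_, (key1 φ hφ).1, (key1 φ hφ).2⟩
    · rintro ⟨a, ha, hsum⟩
      exact key3 φ a ha hsum
  · intro φ _ a h
    exact key2 φ a h.2
  · intro φ hφ
    exact (key1 φ hφ).1
  · intro φ hφ ψ hψ h
    apply LinearMap.ext
    intro x
    have h1 := (key1 φ hφ).2 x
    have h2 := (key1 ψ hψ).2 x
    replace h : (fun i => φ (Pi.single i 1)) = fun i => ψ (Pi.single i 1) := h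
    have h1' : HasSum (fun i => ψ (Pi.single i 1) * x i) (φ x) := by
      refine HasSum.congr_fun h1 fun i => ?_
      rw [congrFun h i]
    exact h1'.unique h2
  · intro a ha
    obtain ⟨φ, hsum⟩ := key4 a ha
    exact ⟨φ, key3 φ a ha hsum, (key2 φ a hsum).symm⟩

end Stmt8
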